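/- Let h : ℝ → ℝ satisfy h(0) = 0 and define G(x,y) = h(x+y) − h(x) − h(y). Let p, n be positive integers with p/n ∈ (0, 1/2), set m₀ = ⌊n/p⌋ and p₁ = n − m₀·p. Then h(p/n) = h(1)/m₀ − (1/m₀)·[ Σ_{j=1}^{m₀−1} G(p/n, j·p/n) + G(p₁/n, 1 − p₁/n) ] − h(p₁/n)/m₀. -/

import Mathlib

/-- Let `h(0) = 0`, `G(x,y) = h(x+y) - h(x) - h(y)`, `p, n` positive integers
with `p/n ∈ (0, 1/2)`, `m₀ = ⌊n/p⌋`, `p₁ = n - m₀·p`. Then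
`h(p/n) = h(1)/m₀ - (1/m₀)[Σ_{j=1}^{m₀-1} G(p/n, j·p/n) + G(p₁/n, 1 - p₁/n)] - h(p₁/n)/m₀`. -/
theorem stmt_4 (h : ℝ → ℝ) (h0 : h 0 = 0)
    (G : ℝ → ℝ → ℝ) (hG : ∀ x y : ℝ, G x y = h (x + y) - h x - h y)
    (p n : ℕ) (hp : 0 < p) (hn : 0 < n) (hlt : (p : ℝ) / n < 1 / 2)
    (m₀ p₁ : ℕ) (hm₀ : m₀ = n / p) (hp₁ : p₁ = n - m₀ * p) :
    h ((p : ℝ) / n) = h 1 / (m₀ : ℝ)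
      - (1 / (m₀ : ℝ)) *
          ((∑ j ∈ Finset.Ico 1 m₀, G ((p : ℝ) / n) ((j : ℝ) * ((p : ℝ) / n)))
            + G ((p₁ : ℝ) / n) (1 - (p₁ : ℝ) / n))
      - h ((p₁ : ℝ) / n) / (m₀ : ℝ) := by
  set a : ℝ := (p : ℝ) / n with ha
  have hnR : (0:ℝ) < n := by exact_mod_cast hn
  have hpn : p ≤ n := by
    by_contra hc
    push_neg at hc
    have : (n : ℝ) < p := by exact_mod_cast hc
    have : (1:ℝ) < a := by
      rw [ha]
      exact (one_lt_div hnR).mpr this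
    linarith [hlt]
  have hm0pos : 0 < m₀ := by
    rw [hm₀]; exact Nat.div_pos hpn hp
  have hm0R : (m₀ : ℝ) ≠ 0 := by exact_mod_cast hm0pos.ne'
  have hmul_le : m₀ * p ≤ n := by rw [hm₀]; exact Nat.div_mul_le_self n p
  have hp₁R : (p₁ : ℝ) = (n : ℝ) - (m₀ : ℝ) * p := by
    rw [hp₁]
    push_cast [Nat.cast_sub hmul_le]
    ring
  have hcast : (m₀ : ℝ) * a = 1 - (p₁ : ℝ) / n := by
    rw [ha, hp₁R]
    field_simp
    ring
  have key : ∀ m : ℕ,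
      (∑ j ∈ Finset.Ico 1 m, (h (a + (j:ℝ) * a) - h a - h ((j:ℝ) * a)))
        = h ((m:ℝ) * a) - (m:ℝ) * h a := by
    intro m
    induction m with
    | zero => simp [h0]
    | succ k ih =>
      rcases Nat.eq_zero_or_pos k with hk | hk
      · subst hk; simp
      · rw [Finset.sum_Ico_succ_top hk, ih]
        have harg : a + (k:ℝ) * a = ((k+1 : ℕ) : ℝ) * a := by push_cast; ring
        rw [harg]
        push_cast
        ring
  have hsum : (∑ j ∈ Finset.Ico 1 m₀, G a ((j:ℝ) * a))
      = h ((m₀:ℝ) * a) - (m₀:ℝ) * h a := by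
    rw [← key m₀]
    exact Finset.sum_congr rfl (fun j _ => hG a ((j:ℝ) * a))
  rw [hsum, hG, hcast]
  have : (p₁:ℝ)/n + (1 - (p₁:ℝ)/n) = 1 := by ring
  rw [this]
  field_simp
  ring
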